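/- arXiv:1608.01562 — 2 statements merged into one kernel-verified Lean document; each statement's English description precedes it below -/
import Mathlib

section
/- For b ≥ 1, the generating function of supporting (n,b)-domino towers is G_b(x) = Σ_{n≥0} g_b(n) x^n = Σ_{i=1}^{b−1} Π_{j=1}^{i} x^{b−j}/(1−x^{b−j}) (as formal power series). -/
/-- `gFun b n` is the number of supporting `(n,b)`-domino towers, defined by the recurrence
`g_b(n) = g_b(n-b+1) + g_{b-1}(n-b+1)` with `g_b(b-1) = 1` for `b ≥ 2` and
`g_b(n) = 0` for `n < 1`, `b < 2`, or `n < b - 1`. -/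
def gFun : ℕ → ℕ → ℕ
  | b, n =>
    if h : b < 2 ∨ n + 1 < b then 0
    else if h' : n + 1 = b then 1
    else gFun b (n + 1 - b) + gFun (b - 1) (n + 1 - b)
termination_by b n => n
decreasing_by all_goals omega

open PowerSeries Finset

private noncomputable def fPS (k : ℕ) : PowerSeries ℚ :=
  (X : PowerSeries ℚ) ^ k * (1 - (X : PowerSeries ℚ) ^ k)⁻¹

private lemma constCoeff_one_sub_X_pow (k : ℕ) (hk : 1 ≤ k) :
    constantCoeff (1 - (X : PowerSeries ℚ) ^ k) ≠ 0 := by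
  have : constantCoeff ((X : PowerSeries ℚ) ^ k) = 0 := by
    rw [map_pow, constantCoeff_X, zero_pow (by omega)]
  simp [this]

private lemma gFun_one (n : ℕ) : gFun 1 n = 0 := by
  rw [gFun]; simp

private lemma gFun_lt_eq (b n : ℕ) (h : n + 1 < b) : gFun b n = 0 := by
  rw [gFun]; simp [h]

private lemma gFun_diag (b : ℕ) (hb : 2 ≤ b) : gFun b (b - 1) = 1 := by
  rw [gFun]
  have h1 : ¬ (b < 2 ∨ b - 1 + 1 < b) := by omega
  have h2 : b - 1 + 1 = b := by omega
  rw [dif_neg h1, dif_pos h2]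

private lemma gFun_rec (b n : ℕ) (hb : 2 ≤ b) (hn : b ≤ n) :
    gFun b n = gFun b (n + 1 - b) + gFun (b - 1) (n + 1 - b) := by
  conv_lhs => rw [gFun]
  have h1 : ¬ (b < 2 ∨ n + 1 < b) := by omega
  have h2 : n + 1 ≠ b := by omega
  rw [dif_neg h1, dif_neg h2]

private lemma gFun_zero' (b : ℕ) (hb : 1 ≤ b) : gFun b 0 = 0 := by
  rcases Nat.lt_or_ge b 2 with hb2 | hb2
  · have : b = 1 := by omega
    rw [this]; exact gFun_one 0
  · exact gFun_lt_eq _ _ (by omega)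

/-- The key functional equation. -/
private lemma key (b : ℕ) (hb : 1 ≤ b) :
    (1 - (X : PowerSeries ℚ) ^ b) * PowerSeries.mk (fun n => (gFun (b + 1) n : ℚ)) =
      (X : PowerSeries ℚ) ^ b * (1 + PowerSeries.mk (fun n => (gFun b n : ℚ))) := by
  ext n
  rw [sub_mul, one_mul, map_sub, coeff_X_pow_mul', coeff_X_pow_mul', coeff_mk]
  rcases lt_trichotomy n b with h | h | h
  · have hn : gFun (b + 1) n = 0 := gFun_lt_eq _ _ (by omega)
    simp [Nat.not_le_of_lt h, hn]
  · have h0 : gFun (b + 1) n = 1 := by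
      rw [h]
      have := gFun_diag (b + 1) (by omega); simpa using this
    have h1 : n - b = 0 := by omega
    have h2 : gFun (b + 1) 0 = 0 := gFun_lt_eq _ _ (by omega)
    have h3 : gFun b 0 = 0 := gFun_zero' b hb
    simp [h0, h1, h2, h3, h.ge]
  · have hle : b ≤ n := le_of_lt h
    rw [if_pos hle, if_pos hle]
    have hrec := gFun_rec (b + 1) n (by omega) (by omega)
    have he : n + 1 - (b + 1) = n - b := by omega
    rw [he] at hrec
    have hsub : n - b ≠ 0 := by omega
    simp only [hrec, map_add, coeff_one, if_neg hsub, coeff_mk]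
    push_cast
    ring

private lemma step (b : ℕ) (hb : 1 ≤ b) :
    PowerSeries.mk (fun n => (gFun (b + 1) n : ℚ)) =
      fPS b * (1 + PowerSeries.mk (fun n => (gFun b n : ℚ))) := by
  have hinv := PowerSeries.inv_mul_cancel _ (constCoeff_one_sub_X_pow b hb)
  calc PowerSeries.mk (fun n => (gFun (b + 1) n : ℚ))
      = ((1 - (X : PowerSeries ℚ) ^ b)⁻¹ * (1 - (X : PowerSeries ℚ) ^ b)) *
          PowerSeries.mk (fun n => (gFun (b + 1) n : ℚ)) := by rw [hinv, one_mul]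
    _ = (1 - (X : PowerSeries ℚ) ^ b)⁻¹ *
          ((1 - (X : PowerSeries ℚ) ^ b) * PowerSeries.mk (fun n => (gFun (b + 1) n : ℚ))) := by
        ring
    _ = (1 - (X : PowerSeries ℚ) ^ b)⁻¹ *
          ((X : PowerSeries ℚ) ^ b * (1 + PowerSeries.mk (fun n => (gFun b n : ℚ)))) := by
        rw [key b hb]
    _ = fPS b * (1 + PowerSeries.mk (fun n => (gFun b n : ℚ))) := by
        rw [fPS]; ring

private lemma prod_icc_range (f : ℕ → PowerSeries ℚ) (n : ℕ) :
    ∏ j ∈ Finset.Icc 1 n, f j = ∏ j ∈ Finset.range n, f (j + 1) := by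
  rw [← Finset.Ico_add_one_right_eq_Icc, Finset.prod_Ico_eq_prod_range]
  simp [add_comm]

private lemma sum_icc_range (f : ℕ → PowerSeries ℚ) (n : ℕ) :
    ∑ j ∈ Finset.Icc 1 n, f j = ∑ j ∈ Finset.range n, f (j + 1) := by
  rw [← Finset.Ico_add_one_right_eq_Icc, Finset.sum_Ico_eq_sum_range]
  simp [add_comm]

open PowerSeries in
/-- For `b ≥ 1`, the generating function of supporting `(n,b)`-domino towers is
`G_b(x) = Σ_{n≥0} g_b(n) xⁿ = Σ_{i=1}^{b-1} Π_{j=1}^{i} x^{b-j}/(1-x^{b-j})`. -/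
theorem supporting_tower_genFun (b : ℕ) (hb : 1 ≤ b) :
    PowerSeries.mk (fun n => (gFun b n : ℚ)) =
      ∑ i ∈ Finset.Icc 1 (b - 1), ∏ j ∈ Finset.Icc 1 i,
        ((X : PowerSeries ℚ) ^ (b - j) * (1 - (X : PowerSeries ℚ) ^ (b - j))⁻¹) := by
  have hIcc : ∀ c : ℕ,
      (∑ i ∈ Finset.Icc 1 (c - 1), ∏ j ∈ Finset.Icc 1 i, fPS (c - j)) =
        ∑ i ∈ Finset.range (c - 1), ∏ j ∈ Finset.range (i + 1), fPS (c - 1 - j) := by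
    intro c
    rw [sum_icc_range]
    apply Finset.sum_congr rfl
    intro i _
    rw [prod_icc_range]
    exact Finset.prod_congr rfl fun j _ => by rw [show c - (j + 1) = c - 1 - j from by omega]
  have main : ∀ b : ℕ, 1 ≤ b → PowerSeries.mk (fun n => (gFun b n : ℚ)) =
      ∑ i ∈ Finset.range (b - 1), ∏ j ∈ Finset.range (i + 1), fPS (b - 1 - j) := by
    intro b
    induction b with
    | zero => omega
    | succ b ih =>
      intro _
      rcases Nat.eq_zero_or_pos b with rfl | hb1
      · ext n; simp [gFun_one]
      · rw [step b hb1, ih hb1]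
        obtain ⟨c, rfl⟩ : ∃ c, b = c + 1 := ⟨b - 1, by omega⟩
        have hprod : ∀ i : ℕ, (∏ j ∈ Finset.range (i + 1), fPS (c + 1 - j)) =
            fPS (c + 1) * ∏ j ∈ Finset.range i, fPS (c - j) := by
          intro i
          rw [Finset.prod_range_succ', Nat.sub_zero, mul_comm]
          congr 1
          exact Finset.prod_congr rfl fun j _ => by
            rw [show c + 1 - (j + 1) = c - j from by omega]
        simp only [Nat.add_sub_cancel, hprod, ← Finset.mul_sum]
        congr 1
        rw [Finset.sum_range_succ']
        simp [add_comm]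
  rw [main b hb]
  exact (hIcc b).symm
end

section
/- For every b ≥ 1, the denominator polynomial g_b(z) = (1−z^b)(1−2z^b) Π_{k=1}^{b−1} (1−z^k)^2 (1−2z^k) has z = 1/2 as a root of multiplicity exactly 1, and 1/2 is its unique root of smallest modulus. -/
open Polynomial

/-- The denominator polynomial
`g_b(z) = (1-z^b)(1-2z^b) Π_{k=1}^{b-1} (1-z^k)² (1-2z^k)` over `ℂ`. -/
noncomputable def gPoly (b : ℕ) : Polynomial ℂ :=
  (1 - X ^ b) * (1 - 2 * X ^ b) *
    ∏ k ∈ Finset.Icc 1 (b - 1), ((1 - X ^ k) ^ 2 * (1 - 2 * X ^ k))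

lemma factor1_ne (k : ℕ) (hk : 1 ≤ k) : (1 - X ^ k : Polynomial ℂ) ≠ 0 := by
  intro h
  have := congrArg (eval 0) h
  simp [zero_pow (by omega : k ≠ 0)] at this

lemma factor2_ne (k : ℕ) (hk : 1 ≤ k) : (1 - 2 * X ^ k : Polynomial ℂ) ≠ 0 := by
  intro h
  have := congrArg (eval 0) h
  simp [zero_pow (by omega : k ≠ 0)] at this

lemma rm_prod {ι : Type*} (s : Finset ι) (f : ι → Polynomial ℂ) (a : ℂ)
    (h : ∀ i ∈ s, f i ≠ 0) :
    rootMultiplicity a (∏ i ∈ s, f i) = ∑ i ∈ s, rootMultiplicity a (f i) := by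
  classical
  induction s using Finset.induction with
  | empty =>
    rw [Finset.prod_empty, Finset.sum_empty]
    exact rootMultiplicity_eq_zero (by simp [IsRoot])
  | @insert x s hx ih =>
    rw [Finset.prod_insert hx, Finset.sum_insert hx,
      rootMultiplicity_mul (mul_ne_zero (h x (by simp))
        (Finset.prod_ne_zero_iff.2 fun i hi => h i (by simp [hi]))),
      ih fun i hi => h i (by simp [hi])]

lemma rm_one_sub_two_X : rootMultiplicity ((1:ℂ)/2) (1 - 2 * X : Polynomial ℂ) = 1 := by
  have h : (1 - 2 * X : Polynomial ℂ) = C (-2) * (X - C (1/2)) := by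
    rw [mul_sub, ← C_mul]
    norm_num
    rw [show (C 2 : Polynomial ℂ) = 2 from map_ofNat C 2]
    ring
  rw [h, rootMultiplicity_mul (by
      intro h0
      have := congrArg (eval 0) h0
      simp at this), rootMultiplicity_C, rootMultiplicity_X_sub_C_self]

lemma eval12_1 (k : ℕ) (hk : 1 ≤ k) : eval ((1:ℂ)/2) ((1 : Polynomial ℂ) - X ^ k) ≠ 0 := by
  simp only [eval_sub, eval_one, eval_pow, eval_X]
  intro h
  have h1 : ((1:ℂ)/2) ^ k = 1 := by linear_combination -h
  have := congrArg (‖·‖) h1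
  simp [map_pow] at this
  have h2 : (1:ℝ) < 2 ^ k := one_lt_pow₀ (by norm_num) (by omega)
  rw [this] at h2
  norm_num at h2

lemma eval12_2 (k : ℕ) (hk : 2 ≤ k) : eval ((1:ℂ)/2) ((1 : Polynomial ℂ) - 2 * X ^ k) ≠ 0 := by
  simp only [eval_sub, eval_one, eval_mul, eval_ofNat, eval_pow, eval_X]
  intro h
  have h1 : ((1:ℂ)/2) ^ k = 1/2 := by linear_combination -h/2
  have habs := congrArg (‖·‖) h1
  simp [map_pow] at habs
  have h2 : (2:ℝ) ^ 2 ≤ 2 ^ k := pow_le_pow_right₀ (by norm_num) hk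
  rw [habs] at h2
  norm_num at h2

/-- For every `b ≥ 1`, `z = 1/2` is a root of `g_b` of multiplicity exactly `1`, and it is
the unique root of smallest modulus: every other root has strictly larger modulus. -/
theorem gPoly_half_root (b : ℕ) (hb : 1 ≤ b) :
    (gPoly b).rootMultiplicity (1 / 2 : ℂ) = 1 ∧
    ∀ z : ℂ, (gPoly b).IsRoot z → z ≠ 1 / 2 → (1 / 2 : ℝ) < ‖z‖ := by
  constructor
  · have hprodne : ∀ k ∈ Finset.Icc 1 (b-1),
        ((1 - X^k)^2 * (1 - 2*X^k) : Polynomial ℂ) ≠ 0 := fun k hk =>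
      mul_ne_zero (pow_ne_zero _ (factor1_ne k (Finset.mem_Icc.mp hk).1))
        (factor2_ne k (Finset.mem_Icc.mp hk).1)
    rw [gPoly, rootMultiplicity_mul (mul_ne_zero (mul_ne_zero (factor1_ne b hb)
        (factor2_ne b hb)) (Finset.prod_ne_zero_iff.2 hprodne)),
      rootMultiplicity_mul (mul_ne_zero (factor1_ne b hb) (factor2_ne b hb)),
      rm_prod _ _ _ hprodne,
      rootMultiplicity_eq_zero (eval12_1 b hb)]
    have hsum : ∀ k ∈ Finset.Icc 1 (b-1),
        rootMultiplicity ((1:ℂ)/2) ((1 - X^k)^2 * (1 - 2*X^k) : Polynomial ℂ)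
          = if k = 1 then 1 else 0 := by
      intro k hk
      obtain ⟨hk1, hk2⟩ := Finset.mem_Icc.mp hk
      rw [rootMultiplicity_mul (hprodne k hk)]
      have hsq : rootMultiplicity ((1:ℂ)/2) (((1 - X^k) : Polynomial ℂ)^2) = 0 := by
        apply rootMultiplicity_eq_zero
        simp only [IsRoot, eval_pow]
        exact pow_ne_zero _ (eval12_1 k hk1)
      rw [hsq, zero_add]
      rcases eq_or_lt_of_le hk1 with h1 | h1
      · obtain rfl : k = 1 := h1.symm
        rw [if_pos rfl, pow_one]
        exact rm_one_sub_two_X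
      · rw [if_neg (by omega), rootMultiplicity_eq_zero (eval12_2 k h1)]
    rw [Finset.sum_congr rfl hsum, Finset.sum_ite_eq' (Finset.Icc 1 (b-1)) 1 (fun _ => 1)]
    rcases eq_or_lt_of_le hb with h1 | h1
    · obtain rfl : b = 1 := h1.symm
      rw [pow_one, rm_one_sub_two_X]
      norm_num
    · rw [if_pos (Finset.mem_Icc.mpr ⟨le_refl 1, by omega⟩),
        rootMultiplicity_eq_zero (eval12_2 b h1)]
  · intro z hz hne
    by_contra hle
    push_neg at hle
    have habs : ∀ k : ℕ, 1 ≤ k → ¬ (z ^ k = 1 ∨ 2 * z ^ k = 1) := by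
      intro k hk hor
      have hnn : (0:ℝ) ≤ ‖z‖ := norm_nonneg z
      have hpk : ‖z ^ k‖ ≤ (1/2 : ℝ)^k := by
        rw [norm_pow]; exact pow_le_pow_left₀ hnn hle k
      rcases hor with h1 | h2
      · rw [h1, norm_one] at hpk
        have h2 : ((1:ℝ)/2)^k ≤ (1/2)^1 :=
          pow_le_pow_of_le_one (by norm_num) (by norm_num) hk
        norm_num at h2
        linarith
      · have hz2 : z ^ k = 1/2 := by
          rw [eq_div_iff (two_ne_zero), mul_comm]; exact h2
        rw [hz2, show ‖(1:ℂ)/2‖ = (1/2 : ℝ) by simp] at hpk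
        rcases Nat.lt_or_ge k 2 with hk2 | hk2
        · interval_cases k
          exact hne (by simpa using hz2)
        · have h3 : ((1:ℝ)/2)^k ≤ (1/2)^2 :=
            pow_le_pow_of_le_one (by norm_num) (by norm_num) hk2
          norm_num at h3
          linarith
    have hval : ((1:ℂ) - z^b) * (1 - 2*z^b) *
        ∏ k ∈ Finset.Icc 1 (b-1), ((1-z^k)^2*(1-2*z^k)) = 0 := by
      have := hz
      simpa [gPoly, IsRoot, eval_prod] using this
    rcases mul_eq_zero.mp hval with h | h
    · rcases mul_eq_zero.mp h with h | h
      · exact habs b hb (Or.inl (sub_eq_zero.mp h).symm)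
      · exact habs b hb (Or.inr (sub_eq_zero.mp h).symm)
    · obtain ⟨k, hk, hk0⟩ := Finset.prod_eq_zero_iff.mp h
      have hk1 : 1 ≤ k := (Finset.mem_Icc.mp hk).1
      rcases mul_eq_zero.mp hk0 with h | h
      · have h' := pow_eq_zero_iff (n := 2) (by norm_num) |>.mp h
        exact habs k hk1 (Or.inl (sub_eq_zero.mp h').symm)
      · exact habs k hk1 (Or.inr (sub_eq_zero.mp h).symm)
end
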